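/- If an irreducible $4$-dimensional representation $\sigma$ of a group $G$ over an algebraically closed field of characteristic not two has a nontrivial quadratic self-twist by a character $\chi$ with kernel $H$ of index two, then the restriction $\sigma|_H$ decomposes as a direct sum of two $2$-dimensional subrepresentations, and the $G$-translates of $\wedge^2 W$, for $W$ one of these $2$-dimensional $H$-invariant subspaces, span a $G$-invariant $2$-dimensional subspace of $\wedge^2 V$. -/

import Mathlib

open ExteriorAlgebra

theorem exteriorPower_map_mem {k : Type*} [Field k] {V : Type*} [AddCommGroup V] [Module k V]
    (f : V →ₗ[k] V) {n : ℕ} {x : ExteriorAlgebra k V} (hx : x ∈ ⋀[k]^n V) :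
    ExteriorAlgebra.map f x ∈ ⋀[k]^n V := by
  have h1 : Submodule.map (ExteriorAlgebra.map f).toLinearMap
      (LinearMap.range (ι k : V →ₗ[k] ExteriorAlgebra k V)) ≤
      LinearMap.range (ι k : V →ₗ[k] ExteriorAlgebra k V) := by
    rintro _ ⟨y, hy, rfl⟩
    obtain ⟨v, rfl⟩ := hy
    exact ⟨f v, (ExteriorAlgebra.map_apply_ι f v).symm⟩
  have h2 : Submodule.map (ExteriorAlgebra.map f).toLinearMap (⋀[k]^n V) ≤ ⋀[k]^n V := by
    rw [exteriorPower, Submodule.map_pow]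
    exact pow_le_pow_left' h1 n
  exact h2 ⟨x, hx, rfl⟩

/-- The induced action of a linear endomorphism on the second exterior power `⋀²V`. -/
noncomputable def exMap {k : Type*} [Field k] {V : Type*} [AddCommGroup V] [Module k V]
    (f : V →ₗ[k] V) : (⋀[k]^2 V) →ₗ[k] (⋀[k]^2 V) :=
  (ExteriorAlgebra.map f).toLinearMap.restrict (fun _ hx => exteriorPower_map_mem f hx)

/-- The wedge `v ∧ w` as an element of the second exterior power. -/
noncomputable def wedge {k : Type*} [Field k] {V : Type*} [AddCommGroup V] [Module k V]
    (v w : V) : ⋀[k]^2 V :=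
  ⟨ιMulti k 2 ![v, w], ιMulti_range k 2 ⟨![v, w], rfl⟩⟩

section Aux
variable {k : Type*} [Field k] {V : Type*} [AddCommGroup V] [Module k V]

lemma ιMulti_two (v w : V) : ιMulti k 2 ![v, w] = ι k v * ι k w := by
  rw [ιMulti_apply]
  simp [List.ofFn_succ]

lemma wedge_val (v w : V) : ((wedge v w : ⋀[k]^2 V) : ExteriorAlgebra k V) = ι k v * ι k w := by
  rw [wedge]; exact ιMulti_two v w

lemma wedge_val' (v w : V) :
    ((wedge v w : ⋀[k]^2 V) : ExteriorAlgebra k V) = ιMulti k 2 ![v, w] := rfl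

lemma exMap_wedge (f : V →ₗ[k] V) (v w : V) :
    exMap f (wedge v w) = wedge (f v) (f w) := by
  apply Subtype.ext
  show (ExteriorAlgebra.map f) ((wedge v w : ⋀[k]^2 V) : ExteriorAlgebra k V) = _
  rw [wedge_val, wedge_val]
  simp [ExteriorAlgebra.map_apply_ι]

lemma ι_mul_swap (x y : V) : ι k y * ι k x = -(ι k x * ι k y) :=
  eq_neg_of_add_eq_zero_right (ExteriorAlgebra.ι_add_mul_swap x y)

lemma wedge_expand (x y : V) (a b c d : k) :
    wedge (a • x + b • y) (c • x + d • y) = (a * d - b * c) • (wedge x y : ⋀[k]^2 V) := by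
  apply Subtype.ext
  rw [wedge_val, SetLike.val_smul, wedge_val]
  simp only [map_add, map_smul, mul_add, add_mul, smul_mul_assoc, mul_smul_comm,
    ι_sq_zero, ι_mul_swap x y, smul_smul, smul_zero, smul_neg]
  rw [sub_smul]
  module

/-- A linear functional on the exterior algebra from an alternating 2-form. -/
noncomputable def lift2 (φ : V [⋀^Fin 2]→ₗ[k] k) : ExteriorAlgebra k V →ₗ[k] k :=
  liftAlternating (Function.update 0 2 φ)

lemma lift2_ιMulti (φ : V [⋀^Fin 2]→ₗ[k] k) (v : Fin 2 → V) :
    lift2 φ (ιMulti k 2 v) = φ v := by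
  rw [lift2, liftAlternating_apply_ιMulti, Function.update_self]

/-- An alternating 2-form from two linear functionals. -/
noncomputable def altOf (c0 c1 : V →ₗ[k] k) : V [⋀^Fin 2]→ₗ[k] k :=
  (Matrix.detRowAlternating (R := k) (n := Fin 2)).compLinearMap (LinearMap.pi ![c0, c1])

lemma altOf_apply (c0 c1 : V →ₗ[k] k) (v w : V) :
    altOf c0 c1 ![v, w] = c0 v * c1 w - c0 w * c1 v := by
  have : altOf c0 c1 ![v, w] =
      Matrix.det (Matrix.of fun i => LinearMap.pi ![c0, c1] (![v, w] i)) := rfl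
  rw [this, Matrix.det_fin_two]
  simp [LinearMap.pi_apply]
  ring

end Aux

/-- If an irreducible `4`-dimensional representation `σ` of `G` has a
nontrivial quadratic self-twist by `χ` with kernel `H` (of index two), then `σ|_H` splits as a
direct sum of two `2`-dimensional subrepresentations `W₁ ⊕ W₂`, and the `G`-translates of
`⋀²W₁` span a `G`-invariant `2`-dimensional subspace of `⋀²V`. -/
theorem quadratic_self_twist_clifford_decomposition
    {k : Type*} [Field k] [IsAlgClosed k] (h2 : (2 : k) ≠ 0)
    {V : Type*} [AddCommGroup V] [Module k V] [FiniteDimensional k V]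
    (hV : Module.finrank k V = 4)
    {G : Type*} [Group G] (σ : Representation k G V)
    (hirr : ∀ W : Submodule k V, (∀ g : G, ∀ v ∈ W, σ g v ∈ W) → W = ⊥ ∨ W = ⊤)
    (χ : G →* kˣ) (hχ1 : χ ≠ 1) (hχ2 : ∀ g : G, χ g * χ g = 1)
    (T : V ≃ₗ[k] V) (hT : ∀ (g : G) (v : V), T ((χ g : k) • σ g v) = σ g (T v)) :
    χ.ker.index = 2 ∧
    ∃ W₁ W₂ : Submodule k V, IsCompl W₁ W₂ ∧
      Module.finrank k W₁ = 2 ∧ Module.finrank k W₂ = 2 ∧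
      (∀ h ∈ χ.ker, ∀ v ∈ W₁, σ h v ∈ W₁) ∧
      (∀ h ∈ χ.ker, ∀ v ∈ W₂, σ h v ∈ W₂) ∧
      (Module.finrank k
        (Submodule.span k {x : ⋀[k]^2 V |
          ∃ g : G, ∃ v ∈ W₁, ∃ w ∈ W₁, x = exMap (σ g) (wedge v w)}) = 2 ∧
       ∀ g : G, ∀ x ∈ Submodule.span k {x : ⋀[k]^2 V |
          ∃ g' : G, ∃ v ∈ W₁, ∃ w ∈ W₁, x = exMap (σ g') (wedge v w)},
         exMap (σ g) x ∈ Submodule.span k {x : ⋀[k]^2 V |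
          ∃ g' : G, ∃ v ∈ W₁, ∃ w ∈ W₁, x = exMap (σ g') (wedge v w)}) := by
  have hnt : Nontrivial V := by
    apply Module.nontrivial_of_finrank_pos (R := k); omega
  -- values of χ in k
  have hval2 : ∀ g : G, (χ g : k) * (χ g : k) = 1 := fun g => by
    have := congrArg (Units.val) (hχ2 g); simpa using this
  have hpm : ∀ g : G, (χ g : k) = 1 ∨ (χ g : k) = -1 := fun g =>
    mul_self_eq_one_iff.mp (hval2 g)
  have hn1 : (-1 : k) ≠ 1 := by
    intro h; apply h2; linear_combination -h
  -- inverses in the group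
  have hσinv : ∀ (g : G) (v : V), σ g (σ g⁻¹ v) = v := by
    intro g v
    have : σ g * σ g⁻¹ = 1 := by rw [← map_mul, mul_inv_cancel, map_one]
    calc σ g (σ g⁻¹ v) = (σ g * σ g⁻¹) v := rfl
    _ = v := by rw [this]; rfl
  have hσinj : ∀ g : G, Function.Injective (σ g) := by
    intro g x y hxy
    have := congrArg (σ g⁻¹) hxy
    calc x = σ g⁻¹ (σ g x) := by
            have := hσinv g⁻¹ x; rwa [inv_inv, eq_comm] at this
    _ = σ g⁻¹ (σ g y) := this
    _ = y := by have := hσinv g⁻¹ y; rwa [inv_inv] at this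
  -- the basic twisted commutation for T
  have hT' : ∀ (g : G) (v : V), T (σ g v) = (χ g : k) • σ g (T v) := by
    intro g v
    have h := hT g v
    rw [map_smul] at h
    calc T (σ g v) = ((χ g : k) * (χ g : k)) • T (σ g v) := by rw [hval2, one_smul]
    _ = (χ g : k) • ((χ g : k) • T (σ g v)) := by rw [mul_smul]
    _ = (χ g : k) • σ g (T v) := by rw [h]
  -- T² is a scalar
  set A : Module.End k V := (T.toLinearMap ∘ₗ T.toLinearMap) with hA_def
  have hA : ∀ (g : G) (v : V), A (σ g v) = σ g (A v) := by
    intro g v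
    show T (T (σ g v)) = σ g (T (T v))
    rw [hT', map_smul, hT', smul_smul, hval2, one_smul]
  obtain ⟨c, hc⟩ := Module.End.exists_eigenvalue A
  have heig : Module.End.eigenspace A c = ⊤ := by
    rcases hirr (Module.End.eigenspace A c) (fun g v hv => by
      rw [Module.End.mem_eigenspace_iff] at hv ⊢
      rw [hA, hv, map_smul]) with h | h
    · exact absurd h hc
    · exact h
  have hAv : ∀ v : V, T (T v) = c • v := by
    intro v
    have : v ∈ Module.End.eigenspace A c := heig ▸ Submodule.mem_top
    rw [Module.End.mem_eigenspace_iff] at this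
    exact this
  have hc0 : c ≠ 0 := by
    intro h0
    obtain ⟨v, hv⟩ := exists_ne (0 : V)
    apply hv
    have := hAv v
    rw [h0, zero_smul] at this
    have h1 : T v = 0 := by
      have := congrArg T.symm this
      simpa using this
    have := congrArg T.symm h1
    simpa using this
  obtain ⟨l, hl⟩ := IsAlgClosed.exists_pow_nat_eq c (n := 2) two_pos
  have hl0 : l ≠ 0 := by rintro rfl; rw [zero_pow (by norm_num)] at hl; exact hc0 hl.symm
  set S : Module.End k V := l⁻¹ • T.toLinearMap with hS_def
  have hS2 : ∀ v : V, S (S v) = v := by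
    intro v
    show l⁻¹ • T (l⁻¹ • T v) = v
    rw [map_smul, smul_smul, hAv, smul_smul]
    have : l⁻¹ * l⁻¹ * c = 1 := by
      rw [← hl]; field_simp
    rw [this, one_smul]
  have hSg : ∀ (g : G) (v : V), S (σ g v) = (χ g : k) • σ g (S v) := by
    intro g v
    show l⁻¹ • T (σ g v) = (χ g : k) • σ g (l⁻¹ • T v)
    rw [hT', map_smul, smul_smul, smul_smul, mul_comm]
  set W₁ : Submodule k V := LinearMap.ker (S - LinearMap.id) with hW₁_def
  set W₂ : Submodule k V := LinearMap.ker (S + LinearMap.id) with hW₂_def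
  have hmem₁ : ∀ v : V, v ∈ W₁ ↔ S v = v := by
    intro v
    rw [hW₁_def, LinearMap.mem_ker, LinearMap.sub_apply, LinearMap.id_apply, sub_eq_zero]
  have hmem₂ : ∀ v : V, v ∈ W₂ ↔ S v = -v := by
    intro v
    rw [hW₂_def, LinearMap.mem_ker, LinearMap.add_apply, LinearMap.id_apply, add_eq_zero_iff_eq_neg]
  have hcompl : IsCompl W₁ W₂ := by
    constructor
    · rw [disjoint_iff]
      ext v
      simp only [Submodule.mem_inf, Submodule.mem_bot, hmem₁, hmem₂]
      constructor
      · rintro ⟨hv1, hv2⟩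
        have hv : v = -v := hv1.symm.trans hv2
        have hz : (2 : k) • v = 0 := by
          rw [two_smul]
          nth_rewrite 2 [hv]
          exact add_neg_cancel v
        rcases smul_eq_zero.mp hz with h | h
        · exact absurd h h2
        · exact h
      · rintro rfl; simp
    · rw [codisjoint_iff, eq_top_iff]
      intro v _
      rw [Submodule.mem_sup]
      refine ⟨(2 : k)⁻¹ • (v + S v), ?_, (2 : k)⁻¹ • (v - S v), ?_, ?_⟩
      · rw [hmem₁, map_smul, map_add, hS2]
        rw [add_comm]
      · rw [hmem₂, map_smul, map_sub, hS2, ← smul_neg, neg_sub]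
      · rw [← smul_add]
        have : v + S v + (v - S v) = (2 : k) • v := by rw [two_smul]; abel
        rw [this, smul_smul, inv_mul_cancel₀ h2, one_smul]
  -- kernel values
  have hkerval : ∀ h ∈ χ.ker, (χ h : k) = 1 := by
    intro h hh
    rw [MonoidHom.mem_ker] at hh
    rw [hh]; rfl
  have hkeep₁ : ∀ g : G, (χ g : k) = 1 → ∀ v ∈ W₁, σ g v ∈ W₁ := by
    intro g hg v hv
    rw [hmem₁] at hv ⊢
    rw [hSg, hv, hg, one_smul]
  have hinv₁ : ∀ h ∈ χ.ker, ∀ v ∈ W₁, σ h v ∈ W₁ :=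
    fun h hh => hkeep₁ h (hkerval h hh)
  have hinv₂ : ∀ h ∈ χ.ker, ∀ v ∈ W₂, σ h v ∈ W₂ := by
    intro h hh v hv
    rw [hmem₂] at hv ⊢
    rw [hSg, hv, hkerval h hh, one_smul, map_neg]
  -- a group element with χ = -1
  have hex : ∃ g₀ : G, (χ g₀ : k) = -1 := by
    by_contra hcon
    push_neg at hcon
    apply hχ1
    ext g
    simp only [MonoidHom.one_apply, Units.val_one]
    rcases hpm g with h | h
    · exact h
    · exact absurd h (hcon g)
  obtain ⟨g₀, hg₀⟩ := hex
  -- swapping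
  have hswap₁ : ∀ (g : G), (χ g : k) = -1 → ∀ v ∈ W₁, σ g v ∈ W₂ := by
    intro g hg v hv
    rw [hmem₁] at hv
    rw [hmem₂, hSg, hv, hg, neg_one_smul]
  have hswap₂ : ∀ (g : G), (χ g : k) = -1 → ∀ v ∈ W₂, σ g v ∈ W₁ := by
    intro g hg v hv
    rw [hmem₂] at hv
    rw [hmem₁, hSg, hv, hg, map_neg, neg_one_smul, neg_neg]
  have hginv : ∀ g : G, (χ g : k) = -1 → (χ g⁻¹ : k) = -1 := by
    intro g hg
    have h1 : χ g⁻¹ * χ g = 1 := by rw [← map_mul, inv_mul_cancel, map_one]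
    have h2' : (χ g⁻¹ : k) * (χ g : k) = 1 := by
      have := congrArg Units.val h1; simpa using this
    
    rw [hg] at h2'
    linear_combination -h2'
  -- index two
  have hidx : χ.ker.index = 2 := by
    rw [Subgroup.index_eq_two_iff]
    refine ⟨g₀, fun b => ?_⟩
    have hmemker : ∀ a : G, a ∈ χ.ker ↔ (χ a : k) = 1 := by
      intro a
      rw [MonoidHom.mem_ker]
      constructor
      · intro h; rw [h]; rfl
      · intro h; ext; exact h
    have hbg : (χ (b * g₀) : k) = (χ b : k) * (-1 : k) := by
      rw [map_mul]; push_cast; rw [hg₀]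
    rcases hpm b with h | h
    · right
      refine ⟨(hmemker b).mpr h, ?_⟩
      rw [hmemker, hbg, h]
      intro hcon
      exact hn1 (by linear_combination hcon)
    · left
      refine ⟨?_, ?_⟩
      · rw [hmemker, hbg, h]; ring
      · rw [hmemker, h]; exact hn1
  -- dimensions
  have hd : Module.finrank k W₁ = 2 ∧ Module.finrank k W₂ = 2 := by
    have hf₁ : ∀ x ∈ W₁, σ g₀ x ∈ W₂ := fun x hx => hswap₁ g₀ hg₀ x hx
    have hf₂ : ∀ x ∈ W₂, σ g₀⁻¹ x ∈ W₁ := fun x hx => hswap₂ g₀⁻¹ (hginv g₀ hg₀) x hx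
    have hle₁ : Module.finrank k W₁ ≤ Module.finrank k W₂ := by
      apply LinearMap.finrank_le_finrank_of_injective (f := (σ g₀).restrict hf₁)
      intro x y hxy
      have := congrArg Subtype.val hxy
      rw [LinearMap.restrict_coe_apply, LinearMap.restrict_coe_apply] at this
      exact Subtype.ext (hσinj g₀ this)
    have hle₂ : Module.finrank k W₂ ≤ Module.finrank k W₁ := by
      apply LinearMap.finrank_le_finrank_of_injective (f := (σ g₀⁻¹).restrict hf₂)
      intro x y hxy
      have := congrArg Subtype.val hxy
      rw [LinearMap.restrict_coe_apply, LinearMap.restrict_coe_apply] at this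
      exact Subtype.ext (hσinj g₀⁻¹ this)
    have hsum : Module.finrank k W₁ + Module.finrank k W₂ = 4 := by
      rw [Submodule.finrank_add_eq_of_isCompl hcompl, hV]
    omega
  refine ⟨hidx, W₁, W₂, hcompl, hd.1, hd.2, hinv₁, hinv₂, ?_⟩
  -- bases of W₁ and W₂
  have hrep : ∀ (Wb : Submodule k V) (bb : Module.Basis (Fin 2) k Wb), ∀ v ∈ Wb,
      ∃ a c : k, v = a • (bb 0 : V) + c • (bb 1 : V) := by
    intro Wb bb v hv
    refine ⟨bb.repr ⟨v, hv⟩ 0, bb.repr ⟨v, hv⟩ 1, ?_⟩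
    have h2' : ((∑ i, bb.repr ⟨v, hv⟩ i • bb i : Wb) : V) = v :=
      congrArg Subtype.val (bb.sum_repr ⟨v, hv⟩)
    have h3 : ((∑ i, bb.repr ⟨v, hv⟩ i • bb i : Wb) : V)
        = bb.repr ⟨v, hv⟩ 0 • (bb 0 : V) + bb.repr ⟨v, hv⟩ 1 • (bb 1 : V) := by
      rw [Fin.sum_univ_two]; rfl
    exact h2'.symm.trans h3
  let b₁ : Module.Basis (Fin 2) k W₁ := Module.finBasisOfFinrankEq k W₁ hd.1
  let b₂ : Module.Basis (Fin 2) k W₂ := Module.finBasisOfFinrankEq k W₂ hd.2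
  let bV : Module.Basis (Fin 2 ⊕ Fin 2) k V :=
    (b₁.prod b₂).map (Submodule.prodEquivOfIsCompl W₁ W₂ hcompl)
  have hbVl : ∀ i, bV (Sum.inl i) = (b₁ i : V) := by
    intro i
    simp [bV, Module.Basis.prod_apply, Submodule.coe_prodEquivOfIsCompl']
  have hbVr : ∀ i, bV (Sum.inr i) = (b₂ i : V) := by
    intro i
    simp [bV, Module.Basis.prod_apply, Submodule.coe_prodEquivOfIsCompl']
  have hcoord : ∀ (i j : Fin 2 ⊕ Fin 2), bV.coord i (bV j) = if j = i then 1 else 0 := by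
    intro i j; rw [Module.Basis.coord_apply, Module.Basis.repr_self, Finsupp.single_apply]
  set φ₁ : V [⋀^Fin 2]→ₗ[k] k := altOf (bV.coord (Sum.inl 0)) (bV.coord (Sum.inl 1)) with hφ₁
  set φ₂ : V [⋀^Fin 2]→ₗ[k] k := altOf (bV.coord (Sum.inr 0)) (bV.coord (Sum.inr 1)) with hφ₂
  have hv11 : φ₁ ![(b₁ 0 : V), (b₁ 1 : V)] = 1 := by
    rw [hφ₁, altOf_apply, ← hbVl 0, ← hbVl 1]
    simp [hcoord]
  have hv12 : φ₁ ![(b₂ 0 : V), (b₂ 1 : V)] = 0 := by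
    rw [hφ₁, altOf_apply, ← hbVr 0, ← hbVr 1]
    simp [hcoord]
  have hv21 : φ₂ ![(b₁ 0 : V), (b₁ 1 : V)] = 0 := by
    rw [hφ₂, altOf_apply, ← hbVl 0, ← hbVl 1]
    simp [hcoord]
  have hv22 : φ₂ ![(b₂ 0 : V), (b₂ 1 : V)] = 1 := by
    rw [hφ₂, altOf_apply, ← hbVr 0, ← hbVr 1]
    simp [hcoord]
  set e₁ : ⋀[k]^2 V := wedge (b₁ 0 : V) (b₁ 1 : V) with he₁
  set e₂ : ⋀[k]^2 V := wedge (b₂ 0 : V) (b₂ 1 : V) with he₂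
  have hli : LinearIndependent k ![e₁, e₂] := by
    rw [LinearIndependent.pair_iff]
    intro s t hst
    have hval : s • (e₁ : ExteriorAlgebra k V) + t • (e₂ : ExteriorAlgebra k V) = 0 := by
      have := congrArg Subtype.val hst
      simpa using this
    rw [he₁, he₂, wedge_val', wedge_val'] at hval
    constructor
    · have h := congrArg (lift2 φ₁) hval
      rw [map_add, map_smul, map_smul, lift2_ιMulti, lift2_ιMulti,
        hv11, hv12] at h
      simpa using h
    · have h := congrArg (lift2 φ₂) hval
      rw [map_add, map_smul, map_smul, lift2_ιMulti, lift2_ιMulti,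
        hv21, hv22] at h
      simpa using h
  have hspan : Submodule.span k {x : ⋀[k]^2 V |
        ∃ g : G, ∃ v ∈ W₁, ∃ w ∈ W₁, x = exMap (σ g) (wedge v w)} =
      Submodule.span k (Set.range ![e₁, e₂]) := by
    apply le_antisymm
    · rw [Submodule.span_le]
      rintro x ⟨g, v, hv, w, hw, rfl⟩
      rw [exMap_wedge]
      rcases hpm g with hg | hg
      · obtain ⟨a, c, hac⟩ := hrep W₁ b₁ _ (hkeep₁ g hg v hv)
        obtain ⟨a', c', hac'⟩ := hrep W₁ b₁ _ (hkeep₁ g hg w hw)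
        rw [hac, hac', wedge_expand]
        exact Submodule.smul_mem _ _ (Submodule.subset_span ⟨0, rfl⟩)
      · obtain ⟨a, c, hac⟩ := hrep W₂ b₂ _ (hswap₁ g hg v hv)
        obtain ⟨a', c', hac'⟩ := hrep W₂ b₂ _ (hswap₁ g hg w hw)
        rw [hac, hac', wedge_expand]
        exact Submodule.smul_mem _ _ (Submodule.subset_span ⟨1, rfl⟩)
    · rw [Submodule.span_le]
      rintro x ⟨i, rfl⟩
      fin_cases i
      · apply Submodule.subset_span
        refine ⟨1, (b₁ 0 : V), (b₁ 0).2, (b₁ 1 : V), (b₁ 1).2, ?_⟩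
        rw [exMap_wedge, map_one]
        rfl
      · apply Submodule.subset_span
        refine ⟨g₀, σ g₀⁻¹ (b₂ 0 : V), hswap₂ g₀⁻¹ (hginv g₀ hg₀) _ (b₂ 0).2,
          σ g₀⁻¹ (b₂ 1 : V), hswap₂ g₀⁻¹ (hginv g₀ hg₀) _ (b₂ 1).2, ?_⟩
        rw [exMap_wedge, hσinv, hσinv]
        rfl
  constructor
  · rw [hspan, finrank_span_eq_card hli]
    simp
  · intro g x hx
    induction hx using Submodule.span_induction with
    | mem y hy =>
      obtain ⟨g', v, hv, w, hw, rfl⟩ := hy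
      apply Submodule.subset_span
      refine ⟨g * g', v, hv, w, hw, ?_⟩
      rw [exMap_wedge, exMap_wedge, exMap_wedge, map_mul]
      rfl
    | zero => simp
    | add a b _ _ ha hb =>
      rw [map_add]; exact Submodule.add_mem _ ha hb
    | smul a y _ hy =>
      rw [map_smul]; exact Submodule.smul_mem _ _ hy
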